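/- Let a, b ≥ 2 be integers such that log(a)/log(b) is irrational. Then there exist a prime p dividing a and a real constant C > 0 (depending only on a and b) such that: whenever n, m are nonnegative integers and t ≥ 1 is an integer with a^n = b^m · t, the p-adic valuation of t satisfies ν_p(t) ≥ C·n. -/
import Mathlib

lemma log_eq_sum_factorization (a : ℕ) (ha : a ≠ 0) :
    Real.log a = ∑ p ∈ a.primeFactors, (a.factorization p : ℝ) * Real.log p := by
  conv_lhs => rw [← Nat.factorization_prod_pow_eq_self ha]
  rw [Finsupp.prod, ← Nat.support_factorization]
  push_cast
  rw [Real.log_prod]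
  · exact Finset.sum_congr rfl fun p hp => by rw [Real.log_pow]
  · intro p hp
    have := (Nat.prime_of_mem_primeFactors hp).pos
    positivity

theorem stmt_5 (a b : ℕ) (ha : 2 ≤ a) (hb : 2 ≤ b)
    (hirr : Irrational (Real.log a / Real.log b)) :
    ∃ p : ℕ, p.Prime ∧ p ∣ a ∧ ∃ C : ℝ, 0 < C ∧
      ∀ n m t : ℕ, 1 ≤ t → a ^ n = b ^ m * t →
        (t.factorization p : ℝ) ≥ C * n := by
  have ha0 : a ≠ 0 := by omega
  have hb0 : b ≠ 0 := by omega
  have hLa : 0 < Real.log a := Real.log_pos (by exact_mod_cast ha)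
  have hLb : 0 < Real.log b := Real.log_pos (by exact_mod_cast hb)
  obtain ⟨p, hp, hpa, hkey⟩ : ∃ p : ℕ, p.Prime ∧ p ∣ a ∧
      (b.factorization p : ℝ) * Real.log a < (a.factorization p : ℝ) * Real.log b := by
    by_contra hcon
    push_neg at hcon
    -- hcon : ∀ p, p.Prime → p ∣ a → ν_a(p) * log b ≤ ν_b(p) * log a
    have hsum_a := log_eq_sum_factorization a ha0
    have hsum_b := log_eq_sum_factorization b hb0
    have hgnonneg : ∀ p : ℕ, (0:ℝ) ≤ (b.factorization p : ℝ) * Real.log p := by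
      intro p
      rcases Nat.eq_zero_or_pos p with h | h
      · simp [h]
      · have : (0:ℝ) ≤ Real.log p := Real.log_natCast_nonneg p
        positivity
    have hgle : ∑ p ∈ a.primeFactors, (b.factorization p : ℝ) * Real.log p ≤ Real.log b := by
      rw [hsum_b]
      have h1 : ∑ p ∈ a.primeFactors, (b.factorization p : ℝ) * Real.log p
          = ∑ p ∈ a.primeFactors ∩ b.primeFactors, (b.factorization p : ℝ) * Real.log p := by
        refine (Finset.sum_subset Finset.inter_subset_left fun p hpA hpn => ?_).symm
        have : b.factorization p = 0 := by
          rw [← Nat.support_factorization] at hpn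
          have : p ∉ (b.factorization).support := fun h => hpn (Finset.mem_inter.mpr ⟨hpA, h⟩)
          simpa using Finsupp.notMem_support_iff.mp this
        simp [this]
      rw [h1]
      exact Finset.sum_le_sum_of_subset_of_nonneg Finset.inter_subset_right
        fun p _ _ => hgnonneg p
    have hterm : ∀ p ∈ a.primeFactors,
        (0:ℝ) ≤ ((b.factorization p : ℝ) * Real.log a
          - (a.factorization p : ℝ) * Real.log b) * Real.log p := by
      intro p hpA
      have hp := Nat.prime_of_mem_primeFactors hpA
      have hpd := Nat.dvd_of_mem_primeFactors hpA
      have h1 := hcon p hp hpd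
      have h2 : (0:ℝ) ≤ Real.log p := Real.log_natCast_nonneg p
      nlinarith
    have hsum_eq : ∑ p ∈ a.primeFactors,
        ((b.factorization p : ℝ) * Real.log a
          - (a.factorization p : ℝ) * Real.log b) * Real.log p
        = Real.log a * (∑ p ∈ a.primeFactors, (b.factorization p : ℝ) * Real.log p)
          - Real.log b * Real.log a := by
      have h2 : ∑ p ∈ a.primeFactors,
          ((b.factorization p : ℝ) * Real.log a
            - (a.factorization p : ℝ) * Real.log b) * Real.log p
          = (∑ p ∈ a.primeFactors, Real.log a * ((b.factorization p : ℝ) * Real.log p))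
            - ∑ p ∈ a.primeFactors, Real.log b * ((a.factorization p : ℝ) * Real.log p) := by
        rw [← Finset.sum_sub_distrib]
        exact Finset.sum_congr rfl fun p _ => by ring
      rw [h2, ← Finset.mul_sum, ← Finset.mul_sum, ← hsum_a]
    have hsle : ∑ p ∈ a.primeFactors,
        ((b.factorization p : ℝ) * Real.log a
          - (a.factorization p : ℝ) * Real.log b) * Real.log p ≤ 0 := by
      rw [hsum_eq]
      nlinarith
    have hzero : ∀ p ∈ a.primeFactors,
        ((b.factorization p : ℝ) * Real.log a
          - (a.factorization p : ℝ) * Real.log b) * Real.log p = 0 := by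
      have hs0 : ∑ p ∈ a.primeFactors,
          ((b.factorization p : ℝ) * Real.log a
            - (a.factorization p : ℝ) * Real.log b) * Real.log p = 0 :=
        le_antisymm hsle (Finset.sum_nonneg hterm)
      exact (Finset.sum_eq_zero_iff_of_nonneg hterm).mp hs0
    obtain ⟨q, hq, hqd⟩ := Nat.exists_prime_and_dvd (show a ≠ 1 by omega)
    have hqA : q ∈ a.primeFactors := Nat.mem_primeFactors.mpr ⟨hq, hqd, ha0⟩
    have hz := hzero q hqA
    have hlq : 0 < Real.log q := Real.log_pos (by exact_mod_cast hq.two_le)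
    have heq : (b.factorization q : ℝ) * Real.log a
        = (a.factorization q : ℝ) * Real.log b := by
      rcases mul_eq_zero.mp hz with h | h
      · linarith
      · linarith
    have hva : 0 < a.factorization q := (Nat.Prime.factorization_pos_of_dvd hq ha0 hqd)
    have hvb : 0 < (b.factorization q : ℝ) := by
      by_contra h
      push_neg at h
      have h0 : (b.factorization q : ℝ) = 0 := le_antisymm h (by positivity)
      rw [h0, zero_mul] at heq
      have : (0:ℝ) < (a.factorization q : ℝ) * Real.log b := by
        have : (0:ℝ) < (a.factorization q : ℝ) := by exact_mod_cast hva
        positivity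
      linarith
    refine hirr ⟨(a.factorization q : ℚ) / (b.factorization q : ℚ), ?_⟩
    push_cast
    rw [div_eq_div_iff hvb.ne' hLb.ne']
    linarith
  refine ⟨p, hp, hpa, ((a.factorization p : ℝ) * Real.log b
      - (b.factorization p : ℝ) * Real.log a) / Real.log b, ?_, ?_⟩
  · exact div_pos (by linarith) hLb
  · intro n m t ht heq
    have ht0 : t ≠ 0 := by omega
    have hval : n * a.factorization p = m * b.factorization p + t.factorization p := by
      have h := congrArg (fun x : ℕ => x.factorization p) heq
      simpa [Nat.factorization_pow, Nat.factorization_mul (pow_ne_zero m hb0) ht0]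
        using h
    have hvalR : (n:ℝ) * (a.factorization p : ℝ)
        = (m:ℝ) * (b.factorization p : ℝ) + (t.factorization p : ℝ) := by
      exact_mod_cast hval
    have hle : b ^ m ≤ a ^ n := by
      rw [heq]
      exact Nat.le_mul_of_pos_right _ (by omega)
    have hm : (m:ℝ) * Real.log b ≤ (n:ℝ) * Real.log a := by
      have h1 : ((b:ℝ)) ^ m ≤ ((a:ℝ)) ^ n := by exact_mod_cast hle
      have h2 : Real.log ((b:ℝ) ^ m) ≤ Real.log ((a:ℝ) ^ n) :=
        Real.log_le_log (by positivity) h1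
      rwa [Real.log_pow, Real.log_pow] at h2
    have hvbn : (0:ℝ) ≤ (b.factorization p : ℝ) := by positivity
    rw [ge_iff_le, div_mul_eq_mul_div, div_le_iff₀ hLb]
    nlinarith [mul_le_mul_of_nonneg_left hm hvbn]
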